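/- For each γ ∈ Γ, the restriction of the pseudo-lexicographic order <_lex to the set {u ∈ ⟨X⟩ : deg(u) = γ} of words of degree γ is a well order. -/

import Mathlib

noncomputable section

namespace AdamsPaper

/-- The degree of a word, where each letter `x` has degree `dX x`. -/
def wDeg {X σ : Type*} (dX : X → σ →₀ ℕ) (u : List X) : σ →₀ ℕ := (u.map dX).sum

/-- The pseudo-lexicographic order on words associated to a (strict) order on the
alphabet: `u <_lex v` iff `u = v ++ w` for some nonempty `w`, or `u = r ++ x :: s` and
`v = r ++ y :: t` with `x < y`. -/
def ltLex {X : Type*} (ltX : X → X → Prop) (u v : List X) : Prop :=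
  (∃ w : List X, w ≠ [] ∧ u = v ++ w) ∨
    ∃ (r s t : List X) (x y : X), ltX x y ∧ u = r ++ x :: s ∧ v = r ++ y :: t

section Aux

variable {σ X : Type*}

lemma wDeg_cons (dX : X → σ →₀ ℕ) (x : X) (u : List X) :
    wDeg dX (x :: u) = dX x + wDeg dX u := by simp [wDeg]

lemma wDeg_append (dX : X → σ →₀ ℕ) (u v : List X) :
    wDeg dX (u ++ v) = wDeg dX u + wDeg dX v := by simp [wDeg]

lemma wDeg_eq_zero {dX : X → σ →₀ ℕ} (hdX : ∀ x, dX x ≠ 0) {u : List X}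
    (h : wDeg dX u = 0) : u = [] := by
  cases u with
  | nil => rfl
  | cons x u =>
    rw [wDeg_cons] at h
    exact absurd ((add_eq_zero_iff_of_nonneg (by positivity) (by positivity)).mp h).1 (hdX x)

lemma lex_cases {ltX : X → X → Prop} {u v : List X} (h : List.Lex ltX u v) :
    (∃ w : List X, w ≠ [] ∧ v = u ++ w) ∨
      ∃ (r s t : List X) (x y : X), ltX x y ∧ u = r ++ x :: s ∧ v = r ++ y :: t := by
  induction h with
  | @nil a l => exact Or.inl ⟨a :: l, by simp, by simp⟩
  | @cons a l₁ l₂ h ih =>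
    rcases ih with ⟨w, hw, rfl⟩ | ⟨r, s, t, x, y, hxy, rfl, rfl⟩
    · exact Or.inl ⟨w, hw, rfl⟩
    · exact Or.inr ⟨a :: r, s, t, x, y, hxy, rfl, rfl⟩
  | @rel a₁ l₁ a₂ l₂ h => exact Or.inr ⟨[], l₁, l₂, a₁, a₂, h, rfl, rfl⟩

lemma ltLex_iff_lex {dX : X → σ →₀ ℕ} (hdX : ∀ x, dX x ≠ 0) {ltX : X → X → Prop}
    {u v : List X} (hdeg : wDeg dX u = wDeg dX v) :
    ltLex ltX u v ↔ List.Lex ltX u v := by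
  constructor
  · rintro (⟨w, hw, rfl⟩ | ⟨r, s, t, x, y, hxy, rfl, rfl⟩)
    · rw [wDeg_append, add_eq_left] at hdeg
      exact absurd (wDeg_eq_zero hdX hdeg) hw
    · exact List.Lex.append_left ltX (List.Lex.rel hxy) r
  · intro h
    rcases lex_cases h with ⟨w, hw, rfl⟩ | hr
    · rw [wDeg_append, left_eq_add] at hdeg
      exact absurd (wDeg_eq_zero hdX hdeg) hw
    · exact Or.inr hr

lemma ltG_zero {ltG : (σ →₀ ℕ) → (σ →₀ ℕ) → Prop} (hGtot : IsStrictTotalOrder (σ →₀ ℕ) ltG)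
    (hGwf : WellFounded ltG)
    (hGadd : ∀ γ γ₁ γ₂ : σ →₀ ℕ, ltG γ₁ γ₂ → ltG (γ + γ₁) (γ + γ₂))
    {δ : σ →₀ ℕ} (hδ : δ ≠ 0) : ltG 0 δ := by
  rcases (haveI := hGtot; trichotomous_of ltG 0 δ) with h | h | h
  · exact h
  · exact absurd h.symm hδ
  · exfalso
    obtain ⟨m, ⟨n, rfl⟩, hmin⟩ := hGwf.has_min (Set.range fun n : ℕ => n • δ)
      ⟨0 • δ, ⟨0, rfl⟩⟩
    refine hmin ((n + 1) • δ) ⟨n + 1, rfl⟩ ?_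
    have := hGadd (n • δ) δ 0 h
    simpa [succ_nsmul, add_comm] using this

/-- The key well-foundedness statement: every nonempty set of words of a fixed degree
has a `List.Lex`-minimal element.  Proved by well-founded induction on the degree. -/
lemma key {dX : X → σ →₀ ℕ} (hdX : ∀ x, dX x ≠ 0)
    {ltG : (σ →₀ ℕ) → (σ →₀ ℕ) → Prop} (hGtot : IsStrictTotalOrder (σ →₀ ℕ) ltG)
    (hGwf : WellFounded ltG)
    (hGadd : ∀ γ γ₁ γ₂ : σ →₀ ℕ, ltG γ₁ γ₂ → ltG (γ + γ₁) (γ + γ₂))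
    {ltX : X → X → Prop} (hXtot : IsStrictTotalOrder X ltX)
    (hcomp : ∀ x₁ x₂ : X, ltG (dX x₁) (dX x₂) → ltX x₁ x₂)
    (hfib : ∀ γ : σ →₀ ℕ, WellFounded (fun a b : {x : X // dX x = γ} => ltX a.1 b.1)) :
    ∀ γ : σ →₀ ℕ, ∀ S : Set (List X), S.Nonempty → (∀ u ∈ S, wDeg dX u = γ) →
      ∃ m ∈ S, ∀ u ∈ S, ¬ List.Lex ltX u m := by
  intro γ
  refine hGwf.induction
    (C := fun γ => ∀ S : Set (List X), S.Nonempty → (∀ u ∈ S, wDeg dX u = γ) →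
      ∃ m ∈ S, ∀ u ∈ S, ¬ List.Lex ltX u m) γ ?_
  clear γ
  intro γ IH S hSne hSdeg
  by_cases hnil : ([] : List X) ∈ S
  · exact ⟨[], hnil, fun u _ h => nomatch h⟩
  -- the set of first letters of words in `S`
  set F : Set X := {x | ∃ u', x :: u' ∈ S} with hF
  have hFne : F.Nonempty := by
    obtain ⟨u, hu⟩ := hSne
    cases u with
    | nil => exact absurd hu hnil
    | cons x u' => exact ⟨x, u', hu⟩
  -- a first letter of minimal degree
  obtain ⟨δ, ⟨x₀, hx₀F, rfl⟩, hδmin⟩ := hGwf.has_min (dX '' F) (hFne.image dX)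
  -- a minimal first letter within that fiber
  obtain ⟨⟨x, hxδ⟩, hxF, hxmin⟩ := (hfib (dX x₀)).has_min
    {z : {x : X // dX x = dX x₀} | z.1 ∈ F} ⟨⟨x₀, rfl⟩, hx₀F⟩
  -- `x` is a `ltX`-minimal element of `F`
  have hxminF : ∀ y ∈ F, ¬ ltX y x := by
    intro y hy hyx
    rcases (haveI := hGtot; trichotomous_of ltG (dX y) (dX x₀)) with h | h | h
    · exact hδmin (dX y) ⟨y, hy, rfl⟩ h
    · exact hxmin ⟨y, h⟩ hy hyx
    · have hxy : ltX x y := hcomp x y (hxδ ▸ h)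
      exact absurd (hXtot.trans x y x hxy hyx) (hXtot.irrefl x)
  obtain ⟨u₀, hu₀'⟩ := hxF
  have hu₀ : x :: u₀ ∈ S := hu₀'
  -- the set of tails of words in `S` starting with `x`
  set S' : Set (List X) := {u' | x :: u' ∈ S} with hS'
  have hS'deg : ∀ u' ∈ S', wDeg dX u' = wDeg dX u₀ := by
    intro u' hu'
    have h1 := hSdeg _ hu'
    have h2 := hSdeg _ hu₀
    rw [wDeg_cons] at h1 h2
    exact add_left_cancel (h1.trans h2.symm)
  have hlt : ltG (wDeg dX u₀) γ := by
    have h2' := hSdeg _ hu₀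
    rw [wDeg_cons] at h2'
    have h2 : dX x + wDeg dX u₀ = γ := h2'
    have := hGadd (wDeg dX u₀) 0 (dX x) (ltG_zero hGtot hGwf hGadd (hdX x))
    rw [add_zero, add_comm] at this
    rwa [h2] at this
  obtain ⟨m', hm'S, hm'min⟩ := IH (wDeg dX u₀) hlt S' ⟨u₀, hu₀⟩ hS'deg
  refine ⟨x :: m', hm'S, ?_⟩
  intro u hu h
  cases u with
  | nil => exact hnil hu
  | cons y u' =>
    cases h with
    | cons h => exact hm'min u' hu h
    | rel h => exact hxminF y ⟨u', hu⟩ h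

end Aux

/-- **Lemma.** Let `Γ = σ →₀ ℕ` be a free abelian monoid, `X` an alphabet of elements
of nonzero degree, `<_Γ` a well order on `Γ` compatible with addition, and `<` the well
order on `X` comparing first degrees via `<_Γ` and then within each fiber by a chosen
well order.  Then for each `γ ∈ Γ` the restriction of the pseudo-lexicographic order
`<_lex` to the set of words of degree `γ` is a well order. -/
theorem ltLex_restriction_isWellOrder
    {σ X : Type*} [Nonempty σ] (dX : X → σ →₀ ℕ) (hdX : ∀ x, dX x ≠ 0)
    (ltG : (σ →₀ ℕ) → (σ →₀ ℕ) → Prop) (hGtot : IsStrictTotalOrder (σ →₀ ℕ) ltG)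
    (hGwf : WellFounded ltG)
    (hGadd : ∀ γ γ₁ γ₂ : σ →₀ ℕ, ltG γ₁ γ₂ → ltG (γ + γ₁) (γ + γ₂))
    (ltX : X → X → Prop) (hXtot : IsStrictTotalOrder X ltX)
    -- `<` on `X` refines the degree order `<_Γ` ...
    (hcomp : ∀ x₁ x₂ : X, ltG (dX x₁) (dX x₂) → ltX x₁ x₂)
    -- ... and restricts to a well order on each fiber of `deg`
    (hfib : ∀ γ : σ →₀ ℕ, WellFounded (fun a b : {x : X // dX x = γ} => ltX a.1 b.1)) :
    ∀ γ : σ →₀ ℕ,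
      IsWellOrder {u : List X // wDeg dX u = γ}
        (fun a b => ltLex ltX a.1 b.1) := by
  intro γ
  haveI := hXtot
  have hiff : ∀ a b : {u : List X // wDeg dX u = γ},
      ltLex ltX a.1 b.1 ↔ List.Lex ltX a.1 b.1 :=
    fun a b => ltLex_iff_lex hdX (a.2.trans b.2.symm)
  haveI : IsTrichotomous {u : List X // wDeg dX u = γ}
      (fun a b => ltLex ltX a.1 b.1) := by
    constructor
    intro a b
    rcases trichotomous_of (List.Lex ltX) a.1 b.1 with h | h | h
    · intro hab _; exact absurd ((hiff a b).mpr h) hab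
    · intro _ _; exact Subtype.ext h
    · intro _ hba; exact absurd ((hiff b a).mpr h) hba
  haveI : IsTrans {u : List X // wDeg dX u = γ}
      (fun a b => ltLex ltX a.1 b.1) := by
    constructor
    intro a b c hab hbc
    exact (hiff a c).mpr (List.lex_trans (fun h₁ h₂ => hXtot.trans _ _ _ h₁ h₂) ((hiff a b).mp hab) ((hiff b c).mp hbc))
  haveI : IsWellFounded {u : List X // wDeg dX u = γ}
      (fun a b => ltLex ltX a.1 b.1) := by
    constructor
    rw [WellFounded.wellFounded_iff_has_min]
    intro T hT
    obtain ⟨m, ⟨a, haT, ha⟩, hmin⟩ := key hdX hGtot hGwf hGadd hXtot hcomp hfib γ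
      (Subtype.val '' T) (hT.image _) (by rintro u ⟨a, _, rfl⟩; exact a.2)
    refine ⟨a, haT, ?_⟩
    intro b hbT hb
    have hb' := (hiff b a).mp hb
    rw [ha] at hb'
    exact hmin b.1 ⟨b, hbT, rfl⟩ hb'
  constructor

end AdamsPaper

end
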